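/- arXiv:2510.23534 — 2 statements merged into one kernel-verified Lean document; each statement's English description precedes it below -/
import Mathlib

section
/- Bregman objective identity: let g : ℝ → ℝ be differentiable and strictly convex, and let α₀ be the Riesz representer of a continuous linear functional m, i.e. E[m(W,γ)] = E[α₀(X)γ(X)] for all square-integrable γ. Then the average Bregman divergence E[g(α₀(X)) − g(α(X)) − g′(α(X))(α₀(X) − α(X))] equals E[−g(α(X)) + g′(α(X))α(X) − m(W, g′∘α)] + E[g(α₀(X))], so the two objectives have the same minimizers over any class of candidate functions α. -/
open MeasureTheory

lemma bregman_key {Ω 𝒳 : Type*} [MeasurableSpace Ω] [MeasurableSpace 𝒳]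
    (μ : Measure Ω)
    (X : Ω → 𝒳) (m : (𝒳 → ℝ) → Ω → ℝ) (α₀ : 𝒳 → ℝ) (g : ℝ → ℝ)
    (hα₀ : MemLp (fun ω => α₀ (X ω)) 2 μ)
    (hRiesz : ∀ γ : 𝒳 → ℝ, MemLp (fun ω => γ (X ω)) 2 μ →
      ∫ ω, m γ ω ∂μ = ∫ ω, α₀ (X ω) * γ (X ω) ∂μ)
    (α : 𝒳 → ℝ)
    (hg'α : MemLp (fun ω => deriv g (α (X ω))) 2 μ)
    (hint1 : Integrable (fun ω => g (α₀ (X ω)) - g (α (X ω)) -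
      deriv g (α (X ω)) * (α₀ (X ω) - α (X ω))) μ)
    (hint2 : Integrable (fun ω => -g (α (X ω)) + deriv g (α (X ω)) * α (X ω) -
      m (fun x => deriv g (α x)) ω) μ)
    (hint3 : Integrable (fun ω => g (α₀ (X ω))) μ) :
    ∫ ω, (g (α₀ (X ω)) - g (α (X ω)) - deriv g (α (X ω)) * (α₀ (X ω) - α (X ω))) ∂μ =
      (∫ ω, (-g (α (X ω)) + deriv g (α (X ω)) * α (X ω) -
        m (fun x => deriv g (α x)) ω) ∂μ) + ∫ ω, g (α₀ (X ω)) ∂μ := by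
  have hprod : Integrable (fun ω => α₀ (X ω) * deriv g (α (X ω))) μ := by
    have h : MemLp ((fun ω => α₀ (X ω)) • fun ω => deriv g (α (X ω))) 1 μ :=
      hg'α.smul (q := 2) hα₀
    have := memLp_one_iff_integrable.mp h
    simpa [Pi.smul_apply, smul_eq_mul, Pi.mul_def] using this
  have hint12 : Integrable (fun ω => (g (α₀ (X ω)) - g (α (X ω)) -
      deriv g (α (X ω)) * (α₀ (X ω) - α (X ω))) - (-g (α (X ω)) +
      deriv g (α (X ω)) * α (X ω) - m (fun x => deriv g (α x)) ω)) μ := hint1.sub hint2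
  have hint123 : Integrable (fun ω => (g (α₀ (X ω)) - g (α (X ω)) -
      deriv g (α (X ω)) * (α₀ (X ω) - α (X ω))) - (-g (α (X ω)) +
      deriv g (α (X ω)) * α (X ω) - m (fun x => deriv g (α x)) ω) - g (α₀ (X ω))) μ :=
    hint12.sub hint3
  have hdiff : Integrable (fun ω => m (fun x => deriv g (α x)) ω
      - α₀ (X ω) * deriv g (α (X ω))) μ := by
    refine hint123.congr (Filter.Eventually.of_forall fun ω => ?_)
    dsimp only
    ring
  have hm : Integrable (fun ω => m (fun x => deriv g (α x)) ω) μ := by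
    have h := hdiff.add hprod
    refine h.congr (Filter.Eventually.of_forall fun ω => ?_)
    dsimp only [Pi.add_apply]
    ring
  have hR := hRiesz (fun x => deriv g (α x)) hg'α
  have hz : ∫ ω, (m (fun x => deriv g (α x)) ω - α₀ (X ω) * deriv g (α (X ω))) ∂μ = 0 := by
    rw [integral_sub hm hprod, hR, sub_self]
  have e3 : ∫ ω, ((g (α₀ (X ω)) - g (α (X ω)) - deriv g (α (X ω)) * (α₀ (X ω) - α (X ω)))
      - (-g (α (X ω)) + deriv g (α (X ω)) * α (X ω) - m (fun x => deriv g (α x)) ω)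
      - g (α₀ (X ω))) ∂μ = 0 := by
    rw [show (fun ω => (g (α₀ (X ω)) - g (α (X ω)) - deriv g (α (X ω)) * (α₀ (X ω) - α (X ω)))
      - (-g (α (X ω)) + deriv g (α (X ω)) * α (X ω) - m (fun x => deriv g (α x)) ω)
      - g (α₀ (X ω))) = fun ω => m (fun x => deriv g (α x)) ω
      - α₀ (X ω) * deriv g (α (X ω)) from funext fun ω => by ring]
    exact hz
  rw [integral_sub hint12 hint3, integral_sub hint1 hint2] at e3
  linarith


/-- Bregman objective identity for generalized Riesz regression: the average Bregman
divergence to the Riesz representer α₀ equals the feasible objective plus a constant,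
so the two objectives have the same minimizers over any class of candidate functions. -/
theorem stmt9 {Ω 𝒳 : Type*} [MeasurableSpace Ω] [MeasurableSpace 𝒳]
    (μ : Measure Ω) [IsProbabilityMeasure μ]
    (X : Ω → 𝒳) (m : (𝒳 → ℝ) → Ω → ℝ) (α₀ : 𝒳 → ℝ) (g : ℝ → ℝ)
    (hg : Differentiable ℝ g) (hgc : StrictConvexOn ℝ Set.univ g)
    (hα₀ : MemLp (fun ω => α₀ (X ω)) 2 μ)
    -- α₀ is the Riesz representer of the continuous linear functional m
    (hRiesz : ∀ γ : 𝒳 → ℝ, MemLp (fun ω => γ (X ω)) 2 μ →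
      ∫ ω, m γ ω ∂μ = ∫ ω, α₀ (X ω) * γ (X ω) ∂μ)
    -- integrability for the candidate α and the derived functions
    (α : 𝒳 → ℝ)
    (hα : MemLp (fun ω => α (X ω)) 2 μ)
    (hg'α : MemLp (fun ω => deriv g (α (X ω))) 2 μ)
    (hint1 : Integrable (fun ω => g (α₀ (X ω)) - g (α (X ω)) -
      deriv g (α (X ω)) * (α₀ (X ω) - α (X ω))) μ)
    (hint2 : Integrable (fun ω => -g (α (X ω)) + deriv g (α (X ω)) * α (X ω) -
      m (fun x => deriv g (α x)) ω) μ)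
    (hint3 : Integrable (fun ω => g (α₀ (X ω))) μ) :
    -- the identity
    (∫ ω, (g (α₀ (X ω)) - g (α (X ω)) - deriv g (α (X ω)) * (α₀ (X ω) - α (X ω))) ∂μ =
      (∫ ω, (-g (α (X ω)) + deriv g (α (X ω)) * α (X ω) -
        m (fun x => deriv g (α x)) ω) ∂μ) + ∫ ω, g (α₀ (X ω)) ∂μ) ∧
    -- hence the two objectives have the same minimizers over any candidate class 𝒜
    (∀ 𝒜 : Set (𝒳 → ℝ),
      (∀ β ∈ 𝒜, MemLp (fun ω => β (X ω)) 2 μ ∧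
        MemLp (fun ω => deriv g (β (X ω))) 2 μ ∧
        Integrable (fun ω => g (α₀ (X ω)) - g (β (X ω)) -
          deriv g (β (X ω)) * (α₀ (X ω) - β (X ω))) μ ∧
        Integrable (fun ω => -g (β (X ω)) + deriv g (β (X ω)) * β (X ω) -
          m (fun x => deriv g (β x)) ω) μ) →
      ∀ αs ∈ 𝒜,
        ((∀ β ∈ 𝒜,
          ∫ ω, (g (α₀ (X ω)) - g (αs (X ω)) - deriv g (αs (X ω)) * (α₀ (X ω) - αs (X ω))) ∂μ ≤
          ∫ ω, (g (α₀ (X ω)) - g (β (X ω)) - deriv g (β (X ω)) * (α₀ (X ω) - β (X ω))) ∂μ) ↔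
        (∀ β ∈ 𝒜,
          ∫ ω, (-g (αs (X ω)) + deriv g (αs (X ω)) * αs (X ω) -
            m (fun x => deriv g (αs x)) ω) ∂μ ≤
          ∫ ω, (-g (β (X ω)) + deriv g (β (X ω)) * β (X ω) -
            m (fun x => deriv g (β x)) ω) ∂μ))) := by
  refine ⟨bregman_key μ X m α₀ g hα₀ hRiesz α hg'α hint1 hint2 hint3, ?_⟩
  intro 𝒜 h𝒜 αs hαs
  have hid : ∀ β ∈ 𝒜,
      ∫ ω, (g (α₀ (X ω)) - g (β (X ω)) - deriv g (β (X ω)) * (α₀ (X ω) - β (X ω))) ∂μ =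
      (∫ ω, (-g (β (X ω)) + deriv g (β (X ω)) * β (X ω) -
        m (fun x => deriv g (β x)) ω) ∂μ) + ∫ ω, g (α₀ (X ω)) ∂μ := by
    intro β hβ
    obtain ⟨_, hb, hc, hd⟩ := h𝒜 β hβ
    exact bregman_key μ X m α₀ g hα₀ hRiesz β hb hc hd hint3
  have hs := hid αs hαs
  constructor <;> intro h β hβ <;> have h2 := hid β hβ <;> have h3 := h β hβ <;> linarith
end

section
/- Argmin equality for generalized Riesz regression: under the assumptions of the previous identity, if α₀ ∈ 𝒜 then α₀ minimizes BR_g(α) := E[−g(α(X)) + g′(α(X))α(X) − m(W, g′∘α)] over 𝒜, and if g is strictly convex any minimizer equals α₀ almost everywhere (with respect to the distribution of X). -/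
open MeasureTheory

lemma aux_tangent {g : ℝ → ℝ} (hg : Differentiable ℝ g) (hgc : ConvexOn ℝ Set.univ g)
    (b a : ℝ) : g b + deriv g b * (a - b) ≤ g a := by
  rcases lt_trichotomy a b with h | h | h
  · have := hgc.slope_le_deriv (Set.mem_univ a) (Set.mem_univ b) h (hg b)
    rw [slope_def_field, div_le_iff₀ (by linarith)] at this
    nlinarith
  · simp [h]
  · have := hgc.deriv_le_slope (Set.mem_univ b) (Set.mem_univ a) h (hg b)
    rw [slope_def_field, le_div_iff₀ (by linarith)] at this
    nlinarith

lemma aux_tangent_lt {g : ℝ → ℝ} (hg : Differentiable ℝ g) (hgc : StrictConvexOn ℝ Set.univ g)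
    (b a : ℝ) (hne : a ≠ b) : g b + deriv g b * (a - b) < g a := by
  rcases lt_or_gt_of_ne hne with h | h
  · have := hgc.slope_lt_deriv (Set.mem_univ a) (Set.mem_univ b) h (hg b)
    rw [slope_def_field, div_lt_iff₀ (by linarith)] at this
    nlinarith
  · have := hgc.deriv_lt_slope (Set.mem_univ b) (Set.mem_univ a) h (hg b)
    rw [slope_def_field, lt_div_iff₀ (by linarith)] at this
    nlinarith

lemma aux_mul_int {Ω : Type*} [MeasurableSpace Ω] {μ : Measure Ω} {f h : Ω → ℝ}
    (hf : MemLp f 2 μ) (hh : MemLp h 2 μ) : Integrable (fun ω => f ω * h ω) μ := by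
  refine Integrable.mono' (hf.integrable_sq.add hh.integrable_sq) (hf.1.mul hh.1) ?_
  refine Filter.Eventually.of_forall fun ω => ?_
  simp only [Pi.add_apply, Real.norm_eq_abs]
  have h1 : |f ω * h ω| = |f ω| * |h ω| := abs_mul _ _
  nlinarith [abs_nonneg (f ω), abs_nonneg (h ω), sq_nonneg (|f ω| - |h ω|),
    sq_abs (f ω), sq_abs (h ω)]

/-- Argmin equality for generalized Riesz regression: if α₀ ∈ 𝒜 then α₀ minimizes the
feasible Bregman objective BR_g over 𝒜, and (by strict convexity of g) any minimizer
equals α₀ almost everywhere with respect to the distribution of X. -/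
theorem stmt10 {Ω 𝒳 : Type*} [MeasurableSpace Ω] [MeasurableSpace 𝒳]
    (μ : Measure Ω) [IsProbabilityMeasure μ]
    (X : Ω → 𝒳) (m : (𝒳 → ℝ) → Ω → ℝ) (α₀ : 𝒳 → ℝ) (g : ℝ → ℝ)
    (hg : Differentiable ℝ g) (hgc : StrictConvexOn ℝ Set.univ g)
    -- α₀ is the Riesz representer of m
    (hRiesz : ∀ γ : 𝒳 → ℝ, MemLp (fun ω => γ (X ω)) 2 μ →
      ∫ ω, m γ ω ∂μ = ∫ ω, α₀ (X ω) * γ (X ω) ∂μ)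
    (𝒜 : Set (𝒳 → ℝ))
    (hmem : α₀ ∈ 𝒜)
    -- all candidates are square integrable with finite objectives
    (h𝒜 : ∀ β ∈ 𝒜, MemLp (fun ω => β (X ω)) 2 μ ∧
      MemLp (fun ω => deriv g (β (X ω))) 2 μ ∧
      Integrable (fun ω => -g (β (X ω)) + deriv g (β (X ω)) * β (X ω) -
        m (fun x => deriv g (β x)) ω) μ) :
    -- α₀ minimizes BR_g over 𝒜
    (∀ β ∈ 𝒜,
      ∫ ω, (-g (α₀ (X ω)) + deriv g (α₀ (X ω)) * α₀ (X ω) -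
        m (fun x => deriv g (α₀ x)) ω) ∂μ ≤
      ∫ ω, (-g (β (X ω)) + deriv g (β (X ω)) * β (X ω) -
        m (fun x => deriv g (β x)) ω) ∂μ) ∧
    -- any minimizer equals α₀ almost everywhere w.r.t. the distribution of X
    (∀ αs ∈ 𝒜,
      (∀ β ∈ 𝒜,
        ∫ ω, (-g (αs (X ω)) + deriv g (αs (X ω)) * αs (X ω) -
          m (fun x => deriv g (αs x)) ω) ∂μ ≤
        ∫ ω, (-g (β (X ω)) + deriv g (β (X ω)) * β (X ω) -
          m (fun x => deriv g (β x)) ω) ∂μ) →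
      (fun ω => αs (X ω)) =ᵐ[μ] fun ω => α₀ (X ω)) := by
  obtain ⟨hα2, hα'2, hαint⟩ := h𝒜 α₀ hmem
  have hcv : ConvexOn ℝ Set.univ g := hgc.convexOn
  -- the "Fenchel part" of the objective is integrable, and the objective integral
  -- rewrites via the Riesz representation
  have step : ∀ β ∈ 𝒜,
      Integrable (fun ω => -g (β (X ω)) + deriv g (β (X ω)) * β (X ω)) μ ∧
      ∫ ω, (-g (β (X ω)) + deriv g (β (X ω)) * β (X ω) -
          m (fun x => deriv g (β x)) ω) ∂μ =
        ∫ ω, (-g (β (X ω)) + deriv g (β (X ω)) * β (X ω) -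
          α₀ (X ω) * deriv g (β (X ω))) ∂μ := by
    intro β hβ
    obtain ⟨h2, h'2, hint⟩ := h𝒜 β hβ
    have hβ1 : Integrable (fun ω => β (X ω)) μ := h2.integrable one_le_two
    have hgm : AEStronglyMeasurable (fun ω => g (β (X ω))) μ :=
      hg.continuous.comp_aestronglyMeasurable h2.1
    have hfm : AEStronglyMeasurable
        (fun ω => -g (β (X ω)) + deriv g (β (X ω)) * β (X ω)) μ :=
      hgm.neg.add (h'2.1.mul h2.1)
    have hub : Integrable
        (fun ω => -g 0 - deriv g 0 * β (X ω) + deriv g (β (X ω)) * β (X ω)) μ :=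
      ((integrable_const _).sub (hβ1.const_mul _)).add (aux_mul_int h'2 h2)
    have hf : Integrable (fun ω => -g (β (X ω)) + deriv g (β (X ω)) * β (X ω)) μ := by
      refine integrable_of_le_of_le (g₁ := fun _ => -g 0)
        (g₂ := fun ω => -g 0 - deriv g 0 * β (X ω) + deriv g (β (X ω)) * β (X ω))
        hfm ?_ ?_ (integrable_const _) hub
      · refine Filter.Eventually.of_forall fun ω => ?_
        show -g 0 ≤ -g (β (X ω)) + deriv g (β (X ω)) * β (X ω)
        have := aux_tangent hg hcv (β (X ω)) 0
        nlinarith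
      · refine Filter.Eventually.of_forall fun ω => ?_
        show -g (β (X ω)) + deriv g (β (X ω)) * β (X ω) ≤
          -g 0 - deriv g 0 * β (X ω) + deriv g (β (X ω)) * β (X ω)
        have := aux_tangent hg hcv 0 (β (X ω))
        nlinarith
    have hm : Integrable (fun ω => m (fun x => deriv g (β x)) ω) μ := by
      have := hf.sub hint
      exact this.congr (Filter.Eventually.of_forall fun ω => by
        simp only [Pi.sub_apply]; ring)
    refine ⟨hf, ?_⟩
    rw [integral_sub hf hm, integral_sub hf (aux_mul_int hα2 h'2),
      hRiesz (fun x => deriv g (β x)) h'2]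
  -- integrability of the rewritten objectives
  have hstep2 : ∀ β ∈ 𝒜, Integrable (fun ω => -g (β (X ω)) + deriv g (β (X ω)) * β (X ω) -
      α₀ (X ω) * deriv g (β (X ω))) μ :=
    fun β hβ => ((step β hβ).1).sub (aux_mul_int hα2 (h𝒜 β hβ).2.1)
  -- the minimality part, proved once and reused
  have part1 : ∀ β ∈ 𝒜,
      ∫ ω, (-g (α₀ (X ω)) + deriv g (α₀ (X ω)) * α₀ (X ω) -
        m (fun x => deriv g (α₀ x)) ω) ∂μ ≤
      ∫ ω, (-g (β (X ω)) + deriv g (β (X ω)) * β (X ω) -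
        m (fun x => deriv g (β x)) ω) ∂μ := by
    intro β hβ
    rw [(step β hβ).2, (step α₀ hmem).2]
    have h0 : 0 ≤ ∫ ω, ((-g (β (X ω)) + deriv g (β (X ω)) * β (X ω) -
        α₀ (X ω) * deriv g (β (X ω))) -
        (-g (α₀ (X ω)) + deriv g (α₀ (X ω)) * α₀ (X ω) -
        α₀ (X ω) * deriv g (α₀ (X ω)))) ∂μ := by
      refine integral_nonneg fun ω => ?_
      simp only [Pi.zero_apply]
      have := aux_tangent hg hcv (β (X ω)) (α₀ (X ω))
      nlinarith
    rw [integral_sub (hstep2 β hβ) (hstep2 α₀ hmem)] at h0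
    linarith
  refine ⟨part1, ?_⟩
  intro αs hαs hmin
  have heq : ∫ ω, (-g (αs (X ω)) + deriv g (αs (X ω)) * αs (X ω) -
      m (fun x => deriv g (αs x)) ω) ∂μ =
      ∫ ω, (-g (α₀ (X ω)) + deriv g (α₀ (X ω)) * α₀ (X ω) -
      m (fun x => deriv g (α₀ x)) ω) ∂μ :=
    le_antisymm (hmin α₀ hmem) (part1 αs hαs)
  rw [(step αs hαs).2, (step α₀ hmem).2] at heq
  have hDint : Integrable (fun ω => (-g (αs (X ω)) + deriv g (αs (X ω)) * αs (X ω) -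
      α₀ (X ω) * deriv g (αs (X ω))) -
      (-g (α₀ (X ω)) + deriv g (α₀ (X ω)) * α₀ (X ω) -
      α₀ (X ω) * deriv g (α₀ (X ω)))) μ :=
    (hstep2 αs hαs).sub (hstep2 α₀ hmem)
  have hz : ∫ ω, ((-g (αs (X ω)) + deriv g (αs (X ω)) * αs (X ω) -
      α₀ (X ω) * deriv g (αs (X ω))) -
      (-g (α₀ (X ω)) + deriv g (α₀ (X ω)) * α₀ (X ω) -
      α₀ (X ω) * deriv g (α₀ (X ω)))) ∂μ = 0 := by
    rw [integral_sub (hstep2 αs hαs) (hstep2 α₀ hmem)]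
    linarith
  have hnn : 0 ≤ᵐ[μ] fun ω => ((-g (αs (X ω)) + deriv g (αs (X ω)) * αs (X ω) -
      α₀ (X ω) * deriv g (αs (X ω))) -
      (-g (α₀ (X ω)) + deriv g (α₀ (X ω)) * α₀ (X ω) -
      α₀ (X ω) * deriv g (α₀ (X ω)))) := by
    refine Filter.Eventually.of_forall fun ω => ?_
    have := aux_tangent hg hcv (αs (X ω)) (α₀ (X ω))
    simp only [Pi.zero_apply]
    nlinarith
  have hae := (integral_eq_zero_iff_of_nonneg_ae hnn hDint).mp hz
  filter_upwards [hae] with ω hω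
  simp only [Pi.zero_apply] at hω
  by_contra hne
  have := aux_tangent_lt hg hgc (αs (X ω)) (α₀ (X ω)) (fun h => hne h.symm)
  nlinarith
end
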